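/- Let F be a finite field of characteristic 2, let n ≥ 4, and let M be an n×n matrix over F with at most n + 1 nonzero entries (i.e., with fixed XOR K ≤ 1). Then M^k is not an NMDS matrix for every integer k with 0 ≤ k ≤ n. In particular, there does not exist any k-NMDS matrix of order n ≥ 4 with K = 1 and k ≤ n over a field of characteristic 2. -/

import Mathlib

open Matrix

/-- The Hamming weight of a vector: the number of nonzero coordinates. -/
def wt {F : Type*} [Zero F] [DecidableEq F] {n : ℕ} (x : Fin n → F) : ℕ :=
  (Finset.univ.filter fun i => x i ≠ 0).card

/-- The differential branch number of a square matrix `M`: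
the minimum of `wt x + wt (M x)` over all nonzero vectors `x`. -/
noncomputable def branchD {F : Type*} [Field F] [DecidableEq F] {n : ℕ}
    (M : Matrix (Fin n) (Fin n) F) : ℕ :=
  sInf {k | ∃ x : Fin n → F, x ≠ 0 ∧ k = wt x + wt (M.mulVec x)}

/-- The linear branch number of a square matrix `M`:
the minimum of `wt x + wt (Mᵀ x)` over all nonzero vectors `x`. -/
noncomputable def branchL {F : Type*} [Field F] [DecidableEq F] {n : ℕ}
    (M : Matrix (Fin n) (Fin n) F) : ℕ :=
  sInf {k | ∃ x : Fin n → F, x ≠ 0 ∧ k = wt x + wt (Mᵀ.mulVec x)}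

/-- A square matrix of order `n` is near-MDS (NMDS) if both its differential
and linear branch numbers equal `n`. -/
def IsNMDS {F : Type*} [Field F] [DecidableEq F] {n : ℕ}
    (M : Matrix (Fin n) (Fin n) F) : Prop :=
  branchD M = n ∧ branchL M = n
/-- The number of nonzero entries of a matrix. -/
def nonzeroEntries {F : Type*} [Zero F] [DecidableEq F] {n : ℕ}
    (M : Matrix (Fin n) (Fin n) F) : ℕ :=
  (Finset.univ.filter fun p : Fin n × Fin n => M p.1 p.2 ≠ 0).card

section AuxDigraph

variable {F : Type*} [Field F] [DecidableEq F] {n : ℕ}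

/-- Out-neighborhood of a vertex in the support digraph of `M`. -/
def outS (M : Matrix (Fin n) (Fin n) F) (i : Fin n) : Finset (Fin n) :=
  Finset.univ.filter fun j => M i j ≠ 0

/-- One step of the reachability relation. -/
def stepS (M : Matrix (Fin n) (Fin n) F) (S : Finset (Fin n)) : Finset (Fin n) :=
  S.biUnion (outS M)

/-- Vertices reachable from `i` in exactly `t` steps. -/
def RR (M : Matrix (Fin n) (Fin n) F) (t : ℕ) (i : Fin n) : Finset (Fin n) :=
  (stepS M)^[t] {i}

lemma RR_zero (M : Matrix (Fin n) (Fin n) F) (i : Fin n) : RR M 0 i = {i} := rfl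

lemma RR_succ (M : Matrix (Fin n) (Fin n) F) (t : ℕ) (i : Fin n) :
    RR M (t + 1) i = stepS M (RR M t i) :=
  Function.iterate_succ_apply' _ _ _

lemma supp_mem (M : Matrix (Fin n) (Fin n) F) :
    ∀ (t : ℕ) (i j : Fin n), (M ^ t) i j ≠ 0 → j ∈ RR M t i := by
  intro t
  induction t with
  | zero =>
    intro i j hij
    rw [pow_zero, Matrix.one_apply] at hij
    by_cases h : i = j
    · subst h; simp [RR_zero]
    · simp [h] at hij
  | succ t ih =>
    intro i j hij
    rw [pow_succ, Matrix.mul_apply] at hij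
    obtain ⟨l, -, hl⟩ := Finset.exists_ne_zero_of_sum_ne_zero hij
    have h1 : (M ^ t) i l ≠ 0 := left_ne_zero_of_mul hl
    have h2 : M l j ≠ 0 := right_ne_zero_of_mul hl
    rw [RR_succ]
    exact Finset.mem_biUnion.2 ⟨l, ih i l h1,
      Finset.mem_filter.2 ⟨Finset.mem_univ _, h2⟩⟩

lemma wt_row_le (M : Matrix (Fin n) (Fin n) F) (t : ℕ) (i : Fin n) :
    wt (fun j => (M ^ t) i j) ≤ (RR M t i).card := by
  apply Finset.card_le_card
  intro j hj
  exact supp_mem M t i j (Finset.mem_filter.1 hj).2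

end AuxDigraph

/-- For n ≥ 4, an n×n matrix over a finite field of characteristic 2 with at most
n + 1 nonzero entries is not k-NMDS for any k ≤ n. -/
theorem stmt_11 {F : Type*} [Field F] [Fintype F] [DecidableEq F] [CharP F 2]
    {n : ℕ} (hn : 4 ≤ n) (M : Matrix (Fin n) (Fin n) F) (h : nonzeroEntries M ≤ n + 1)
    (k : ℕ) (hk : k ≤ n) :
    ¬ IsNMDS (M ^ k) := by
  rintro ⟨hD, hL⟩
  -- a helper to compute weights of "unit-like" vectors
  have hwt_one : ∀ (v : Fin n → F) (j : Fin n), (∀ i, v i ≠ 0 ↔ i = j) → wt v = 1 := by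
    intro v j hv
    show (Finset.univ.filter fun i => v i ≠ 0).card = 1
    have : (Finset.univ.filter fun i => v i ≠ 0) = {j} := by
      ext i
      simp [hv i]
    rw [this, Finset.card_singleton]
  have hsingle_ne : ∀ j : Fin n, (Pi.single j (1:F) : Fin n → F) ≠ 0 := by
    intro j h0
    have := congrFun h0 j
    simp at this
  have hwt_single : ∀ j : Fin n, wt (Pi.single j (1:F) : Fin n → F) = 1 := by
    intro j
    apply hwt_one _ j
    intro i
    rcases eq_or_ne i j with rfl | hij
    · simp
    · simp [Pi.single_apply, hij]
  -- from branchD: columns of M^k are heavy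
  have hcol : ∀ j, n ≤ 1 + wt (fun i => (M ^ k) i j) := by
    intro j
    have hmv : (M ^ k).mulVec (Pi.single j 1) = fun i => (M ^ k) i j := by
      rw [Matrix.mulVec_single]
      funext i
      simp
    have hmem : (1 + wt fun i => (M ^ k) i j) ∈
        {s | ∃ x : Fin n → F, x ≠ 0 ∧ s = wt x + wt ((M ^ k).mulVec x)} := by
      refine ⟨Pi.single j 1, hsingle_ne j, ?_⟩
      rw [hwt_single j, hmv]
    have h2 : branchD (M ^ k) ≤ 1 + wt fun i => (M ^ k) i j := Nat.sInf_le hmem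
    omega
  -- from branchL: rows of M^k are heavy
  have hrow : ∀ i, n ≤ 1 + wt (fun j => (M ^ k) i j) := by
    intro i
    have hmv : ((M ^ k)ᵀ).mulVec (Pi.single i 1) = fun j => (M ^ k) i j := by
      rw [Matrix.mulVec_single]
      funext j
      simp [-Matrix.transpose_pow]
    have hmem : (1 + wt fun j => (M ^ k) i j) ∈
        {s | ∃ x : Fin n → F, x ≠ 0 ∧ s = wt x + wt ((M ^ k)ᵀ.mulVec x)} := by
      refine ⟨Pi.single i 1, hsingle_ne i, ?_⟩
      rw [hwt_single i, hmv]
    have h2 : branchL (M ^ k) ≤ 1 + wt fun j => (M ^ k) i j := Nat.sInf_le hmem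
    omega
  -- dispose of k = 0
  rcases Nat.eq_zero_or_pos k with rfl | hk1
  · have hj : (0:ℕ) < n := by omega
    have hw : wt (fun i => (M ^ 0) i (⟨0, hj⟩ : Fin n)) = 1 := by
      apply hwt_one _ (⟨0, hj⟩ : Fin n)
      intro i
      rw [pow_zero, Matrix.one_apply]
      rcases eq_or_ne i (⟨0, hj⟩ : Fin n) with rfl | hij
      · simp
      · simp [hij]
    have := hcol ⟨0, hj⟩
    omega
  -- now k ≥ 1; set up degree counting
  have hentries_row : nonzeroEntries M = ∑ i, (outS M i).card := by
    unfold nonzeroEntries outS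
    rw [Finset.card_filter, Fintype.sum_prod_type]
    simp only [Finset.card_filter]
  have hentries_col :
      nonzeroEntries M = ∑ j, (Finset.univ.filter fun i => M i j ≠ 0).card := by
    unfold nonzeroEntries
    rw [Finset.card_filter, Fintype.sum_prod_type, Finset.sum_comm]
    simp only [Finset.card_filter]
  -- every row of M is nonzero
  have hod1 : ∀ i, 1 ≤ (outS M i).card := by
    intro i
    rw [Nat.one_le_iff_ne_zero]
    intro h0
    have hrz : ∀ j, M i j = 0 := by
      intro j
      by_contra hj
      have : j ∈ outS M i := Finset.mem_filter.2 ⟨Finset.mem_univ _, hj⟩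
      rw [Finset.card_eq_zero.1 h0] at this
      exact absurd this (Finset.notMem_empty _)
    obtain ⟨k', rfl⟩ : ∃ k', k = k' + 1 := ⟨k - 1, by omega⟩
    have hzz : ∀ j, (M ^ (k' + 1)) i j = 0 := by
      intro j
      rw [pow_succ', Matrix.mul_apply]
      apply Finset.sum_eq_zero
      intro l _
      rw [hrz l, zero_mul]
    have hw : wt (fun j => (M ^ (k' + 1)) i j) = 0 := by
      show (Finset.univ.filter fun j => (M ^ (k'+1)) i j ≠ 0).card = 0
      rw [Finset.card_eq_zero, Finset.filter_eq_empty_iff]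
      intro j _
      simp [hzz j]
    have := hrow i
    omega
  -- every column of M is nonzero
  have hid1 : ∀ j, 1 ≤ (Finset.univ.filter fun i => M i j ≠ 0).card := by
    intro j
    rw [Nat.one_le_iff_ne_zero]
    intro h0
    have hcz : ∀ i, M i j = 0 := by
      intro i
      by_contra hi
      have : i ∈ Finset.univ.filter fun i => M i j ≠ 0 :=
        Finset.mem_filter.2 ⟨Finset.mem_univ _, hi⟩
      rw [Finset.card_eq_zero.1 h0] at this
      exact absurd this (Finset.notMem_empty _)
    obtain ⟨k', rfl⟩ : ∃ k', k = k' + 1 := ⟨k - 1, by omega⟩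
    have hzz : ∀ i, (M ^ (k' + 1)) i j = 0 := by
      intro i
      rw [pow_succ, Matrix.mul_apply]
      apply Finset.sum_eq_zero
      intro l _
      rw [hcz l, mul_zero]
    have hw : wt (fun i => (M ^ (k' + 1)) i j) = 0 := by
      show (Finset.univ.filter fun i => (M ^ (k'+1)) i j ≠ 0).card = 0
      rw [Finset.card_eq_zero, Finset.filter_eq_empty_iff]
      intro i _
      simp [hzz i]
    have := hcol j
    omega
  -- subset sums of out-degrees
  have hod_sub : ∀ S : Finset (Fin n), ∑ x ∈ S, (outS M x).card ≤ S.card + 1 := by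
    intro S
    have h1 := Finset.sum_add_sum_compl S (fun x => (outS M x).card)
    have h2 : Sᶜ.card ≤ ∑ x ∈ Sᶜ, (outS M x).card := by
      calc Sᶜ.card = ∑ _x ∈ Sᶜ, 1 := by rw [Finset.card_eq_sum_ones]
      _ ≤ ∑ x ∈ Sᶜ, (outS M x).card := Finset.sum_le_sum (fun x _ => hod1 x)
    have h3 : Sᶜ.card = n - S.card := by
      rw [Finset.card_compl]
      simp
    have h4 : S.card ≤ n := by
      have := Finset.card_le_univ S
      simpa using this
    rw [hentries_row] at h
    omega
  -- subset sums of in-degrees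
  have hid_sub : ∀ S : Finset (Fin n),
      ∑ x ∈ S, (Finset.univ.filter fun i => M i x ≠ 0).card ≤ S.card + 1 := by
    intro S
    have h1 := Finset.sum_add_sum_compl S
      (fun x => (Finset.univ.filter fun i => M i x ≠ 0).card)
    have h2 : Sᶜ.card ≤ ∑ x ∈ Sᶜ, (Finset.univ.filter fun i => M i x ≠ 0).card := by
      calc Sᶜ.card = ∑ _x ∈ Sᶜ, 1 := by rw [Finset.card_eq_sum_ones]
      _ ≤ _ := Finset.sum_le_sum (fun x _ => hid1 x)
    have h3 : Sᶜ.card = n - S.card := by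
      rw [Finset.card_compl]
      simp
    have h4 : S.card ≤ n := by
      have := Finset.card_le_univ S
      simpa using this
    rw [hentries_col] at h
    omega
  have hstep_gen : ∀ S : Finset (Fin n), (stepS M S).card ≤ S.card + 1 :=
    fun S => le_trans Finset.card_biUnion_le (hod_sub S)
  -- rows of M^k are heavy in terms of reachability sets
  have hrowR : ∀ i, n ≤ 1 + (RR M k i).card := by
    intro i
    have h1 := hrow i
    have h2 := wt_row_le M k i
    omega
  -- there is a vertex with out-degree ≥ 2
  have hi1ex : ∃ i1, 2 ≤ (outS M i1).card := by
    by_contra h0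
    push_neg at h0
    have hstep : ∀ S : Finset (Fin n), (stepS M S).card ≤ S.card := by
      intro S
      refine le_trans Finset.card_biUnion_le ?_
      calc ∑ x ∈ S, (outS M x).card ≤ ∑ _x ∈ S, 1 :=
        Finset.sum_le_sum (fun x _ => by have := h0 x; omega)
      _ = S.card := by rw [← Finset.card_eq_sum_ones]
    have hRt : ∀ t (i : Fin n), (RR M t i).card ≤ 1 := by
      intro t i
      induction t with
      | zero => simp [RR_zero]
      | succ t ih =>
        rw [RR_succ]
        exact le_trans (hstep _) ih
    have hj : (0:ℕ) < n := by omega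
    have := hrowR ⟨0, hj⟩
    have := hRt k (⟨0, hj⟩ : Fin n)
    omega
  obtain ⟨i1, hi1⟩ := hi1ex
  -- away from i1, steps don't grow
  have hod_ni : ∀ S : Finset (Fin n), i1 ∉ S → ∑ x ∈ S, (outS M x).card ≤ S.card := by
    intro S hS
    have h1 := hod_sub (insert i1 S)
    rw [Finset.sum_insert hS, Finset.card_insert_of_notMem hS] at h1
    omega
  have hstep_ni : ∀ S : Finset (Fin n), i1 ∉ S → (stepS M S).card ≤ S.card :=
    fun S hS => le_trans Finset.card_biUnion_le (hod_ni S hS)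
  -- every vertex reaches i1 within k steps
  have hafind : ∀ i : Fin n, ∃ t, t < k ∧ i1 ∈ RR M t i := by
    intro i
    by_contra h0
    push_neg at h0
    have hsmall : ∀ t, t ≤ k → (RR M t i).card ≤ 1 := by
      intro t
      induction t with
      | zero => intro _; simp [RR_zero]
      | succ t ih =>
        intro ht
        rw [RR_succ]
        exact le_trans (hstep_ni _ (h0 t (by omega))) (ih (by omega))
    have h1 := hsmall k le_rfl
    have h2 := hrowR i
    omega
  -- first-hit times
  have hA : ∀ i : Fin n, ∃ b, b < k ∧ i1 ∈ RR M b i ∧ ∀ t, t < b → i1 ∉ RR M t i := by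
    intro i
    obtain ⟨t, htk, ht⟩ := hafind i
    have hex : ∃ b, i1 ∈ RR M b i := ⟨t, ht⟩
    exact ⟨Nat.find hex, lt_of_le_of_lt (Nat.find_le ht) htk, Nat.find_spec hex,
      fun s hs => Nat.find_min hex hs⟩
  choose a halt hamem hamin using hA
  -- the reachability set at the first-hit time is exactly {i1}
  have hRa : ∀ i, RR M (a i) i = {i1} := by
    intro i
    have hcard : ∀ t, t ≤ a i → (RR M t i).card ≤ 1 := by
      intro t
      induction t with
      | zero => intro _; simp [RR_zero]
      | succ t ih =>
        intro ht
        rw [RR_succ]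
        exact le_trans (hstep_ni _ (hamin i t (by omega))) (ih (by omega))
    have h1 := hcard (a i) le_rfl
    have h2 := hamem i
    apply Finset.eq_singleton_iff_unique_mem.2
    exact ⟨h2, fun x hx => Finset.card_le_one.1 h1 x hx i1 h2⟩
  -- decomposition of the reachability set
  have hRdec : ∀ i, RR M k i = RR M (k - a i) i1 := by
    intro i
    have hiter : (stepS M)^[k] ({i} : Finset (Fin n)) =
        (stepS M)^[k - a i] ((stepS M)^[a i] {i}) := by
      rw [← Function.iterate_add_apply]
      congr 1
      have := halt i
      omega
    show (stepS M)^[k] {i} = (stepS M)^[k - a i] {i1}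
    rw [hiter, show ((stepS M)^[a i] ({i} : Finset (Fin n))) = {i1} from hRa i]
  -- growth bound counting returns to i1
  have hcnt : ∀ m : ℕ, ((Finset.range m).filter fun t => i1 ∈ RR M t i1).card ≤ m := by
    intro m
    calc ((Finset.range m).filter fun t => i1 ∈ RR M t i1).card
        ≤ (Finset.range m).card := Finset.card_filter_le _ _
    _ = m := Finset.card_range m
  have hgrow : ∀ m : ℕ, (RR M m i1).card ≤
      1 + ((Finset.range m).filter fun t => i1 ∈ RR M t i1).card := by
    intro m
    induction m with
    | zero => simp [RR_zero]
    | succ m ih =>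
      rw [RR_succ]
      by_cases hm : i1 ∈ RR M m i1
      · have h1 := hstep_gen (RR M m i1)
        have h2 : ((Finset.range (m+1)).filter fun t => i1 ∈ RR M t i1).card =
            ((Finset.range m).filter fun t => i1 ∈ RR M t i1).card + 1 := by
          rw [Finset.range_add_one, Finset.filter_insert, if_pos hm,
            Finset.card_insert_of_notMem (by simp)]
        omega
      · have h1 := hstep_ni _ hm
        have h2 : ((Finset.range (m+1)).filter fun t => i1 ∈ RR M t i1).card =
            ((Finset.range m).filter fun t => i1 ∈ RR M t i1).card := by
          rw [Finset.range_add_one, Finset.filter_insert, if_neg hm]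
        omega
  -- key per-vertex bound
  have hkey : ∀ i, n - 1 ≤ (RR M (k - a i) i1).card := by
    intro i
    have h1 := hrowR i
    rw [hRdec i] at h1
    omega
  -- all first-hit times are ≤ 2, in fact a i + n ≤ k + 2
  have ha2 : ∀ i, a i + n ≤ k + 2 := by
    intro i
    have h1 := hkey i
    have h2 := hgrow (k - a i)
    have h3 := hcnt (k - a i)
    have h4 := halt i
    omega
  -- unfolding membership in small reachability sets
  have hmem1 : ∀ i x : Fin n, x ∈ RR M 1 i → M i x ≠ 0 := by
    intro i x hx
    rw [show (1:ℕ) = 0 + 1 from rfl, RR_succ, RR_zero] at hx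
    obtain ⟨y, hy, hxy⟩ := Finset.mem_biUnion.1 hx
    rw [Finset.mem_singleton] at hy
    subst hy
    exact (Finset.mem_filter.1 hxy).2
  have ha_le : ∀ (i : Fin n) (s : ℕ), i1 ∈ RR M s i → a i ≤ s := by
    intro i s hs
    by_contra hlt
    exact hamin i s (by omega) hs
  have ha_i1 : a i1 = 0 := by
    have : i1 ∈ RR M 0 i1 := by simp [RR_zero]
    have := ha_le i1 0 this
    omega
  -- there exists a vertex at depth exactly 2
  have hidg_i1_le : (Finset.univ.filter fun i => M i i1 ≠ 0).card ≤ 2 := by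
    have := hid_sub {i1}
    rw [Finset.sum_singleton, Finset.card_singleton] at this
    exact this
  have hex2 : ∃ i0 : Fin n, a i0 = 2 := by
    by_contra h0
    push_neg at h0
    have hsub : Finset.univ ⊆ insert i1 (Finset.univ.filter fun x => M x i1 ≠ 0) := by
      intro i _
      have hai2 : a i ≤ 2 := by
        have := ha2 i
        omega
      have hai : a i ≤ 1 := by
        have := h0 i
        omega
      rcases Nat.le_one_iff_eq_zero_or_eq_one.1 hai with h1 | h1
      · have := hamem i
        rw [h1, RR_zero, Finset.mem_singleton] at this
        subst this
        exact Finset.mem_insert_self _ _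
      · have := hamem i
        rw [h1] at this
        have hMi : M i i1 ≠ 0 := hmem1 i i1 this
        exact Finset.mem_insert_of_mem
          (Finset.mem_filter.2 ⟨Finset.mem_univ _, hMi⟩)
    have hcard := Finset.card_le_card hsub
    rw [Finset.card_univ, Fintype.card_fin] at hcard
    have := Finset.card_insert_le i1 (Finset.univ.filter fun x => M x i1 ≠ 0)
    omega
  obtain ⟨i0, hi0⟩ := hex2
  have hkn : k = n := by
    have := ha2 i0
    omega
  -- the full range of return times is realized; in particular there is a self-loop
  have hloop : M i1 i1 ≠ 0 := by
    have h1 : n - 1 ≤ (RR M (k - 2) i1).card := by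
      have := hkey i0
      rw [hi0] at this
      exact this
    have h2 := hgrow (k - 2)
    have h3 := hcnt (k - 2)
    have hcardge : k - 2 ≤ ((Finset.range (k-2)).filter fun t => i1 ∈ RR M t i1).card := by
      omega
    have hfeq : ((Finset.range (k-2)).filter fun t => i1 ∈ RR M t i1) =
        Finset.range (k-2) := by
      apply Finset.eq_of_subset_of_card_le (Finset.filter_subset _ _)
      rw [Finset.card_range]
      exact hcardge
    have h4 : (1:ℕ) ∈ Finset.range (k-2) := by
      rw [Finset.mem_range]
      omega
    rw [← hfeq] at h4
    have h5 := (Finset.mem_filter.1 h4).2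
    exact hmem1 i1 i1 h5
  -- final counting: the in-neighborhood structure is too small
  set A1 : Finset (Fin n) := (Finset.univ.filter fun x => M x i1 ≠ 0).erase i1 with hA1def
  have hA1i1 : i1 ∉ A1 := Finset.notMem_erase _ _
  have hA1card : A1.card = (Finset.univ.filter fun x => M x i1 ≠ 0).card - 1 := by
    rw [hA1def]
    exact Finset.card_erase_of_mem
      (Finset.mem_filter.2 ⟨Finset.mem_univ _, hloop⟩)
  have hcover : Finset.univ ⊆ insert i1
      (A1 ∪ A1.biUnion fun x => Finset.univ.filter fun i => M i x ≠ 0) := by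
    intro i _
    have hai : a i ≤ 2 := by
      have := ha2 i
      omega
    have : a i = 0 ∨ a i = 1 ∨ a i = 2 := by omega
    rcases this with h1 | h1 | h1
    · have := hamem i
      rw [h1, RR_zero, Finset.mem_singleton] at this
      subst this
      exact Finset.mem_insert_self _ _
    · have hmm := hamem i
      rw [h1] at hmm
      have hMi : M i i1 ≠ 0 := hmem1 i i1 hmm
      have hne : i ≠ i1 := by
        intro heq
        rw [heq, ha_i1] at h1
        exact absurd h1 (by omega)
      refine Finset.mem_insert_of_mem (Finset.mem_union_left _ ?_)
      exact Finset.mem_erase.2 ⟨hne, Finset.mem_filter.2 ⟨Finset.mem_univ _, hMi⟩⟩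
    · have hmm := hamem i
      rw [h1, show RR M 2 i = stepS M (RR M 1 i) from RR_succ M 1 i] at hmm
      obtain ⟨x, hx, hxy⟩ := Finset.mem_biUnion.1 hmm
      have hMx : M x i1 ≠ 0 := (Finset.mem_filter.1 hxy).2
      have hxne : x ≠ i1 := by
        intro heq
        subst heq
        have := ha_le i 1 hx
        omega
      have hxA1 : x ∈ A1 :=
        Finset.mem_erase.2 ⟨hxne, Finset.mem_filter.2 ⟨Finset.mem_univ _, hMx⟩⟩
      have hMix : M i x ≠ 0 := hmem1 i x hx
      refine Finset.mem_insert_of_mem (Finset.mem_union_right _ ?_)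
      exact Finset.mem_biUnion.2 ⟨x, hxA1,
        Finset.mem_filter.2 ⟨Finset.mem_univ _, hMix⟩⟩
  -- put the counting together
  have hcount : n ≤ 1 + A1.card + ∑ x ∈ A1, (Finset.univ.filter fun i => M i x ≠ 0).card := by
    have h1 := Finset.card_le_card hcover
    rw [Finset.card_univ, Fintype.card_fin] at h1
    have h2 := Finset.card_insert_le i1
      (A1 ∪ A1.biUnion fun x => Finset.univ.filter fun i => M i x ≠ 0)
    have h3 := Finset.card_union_le A1
      (A1.biUnion fun x => Finset.univ.filter fun i => M i x ≠ 0)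
    have h4 : (A1.biUnion fun x => Finset.univ.filter fun i => M i x ≠ 0).card ≤
        ∑ x ∈ A1, (Finset.univ.filter fun i => M i x ≠ 0).card :=
      Finset.card_biUnion_le
    omega
  have hsumA1 : (Finset.univ.filter fun i => M i i1 ≠ 0).card +
      ∑ x ∈ A1, (Finset.univ.filter fun i => M i x ≠ 0).card ≤ A1.card + 2 := by
    have h1 := hid_sub (insert i1 A1)
    rw [Finset.sum_insert hA1i1, Finset.card_insert_of_notMem hA1i1] at h1
    omega
  have hidg_ge : A1.card + 1 ≤ (Finset.univ.filter fun i => M i i1 ≠ 0).card := by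
    have hmemloop : i1 ∈ (Finset.univ.filter fun x => M x i1 ≠ 0) :=
      Finset.mem_filter.2 ⟨Finset.mem_univ _, hloop⟩
    have := Finset.card_erase_add_one hmemloop
    rw [← hA1def] at this
    omega
  omega
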